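/- If θ = γ₁ and I¹(θ,γ₁) = I²(θ,γ₁), then θ = γ₁ ≈ 0.3312 and the common value I¹ = I² ≈ 1.7633 exceeds 7/4, where I¹(θ,γ₁) = 3/2 + (1/4)(γ₁ sin θ + cos θ) and I²(θ,γ₁) = 3/2 − (1 − √(1−γ₁²))/8 + (1/8)(sin θ + cos θ(1 + √(1−γ₁²))). More precisely: there exists θ ∈ (0,1) with I¹(θ,θ)=I²(θ,θ) > 7/4. -/

import Mathlib

open Real

theorem exists_symmetric_equal_violation :
    ∃ θ : ℝ, θ ∈ Set.Ioo (0 : ℝ) 1 ∧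
      3 / 2 + (1 / 4) * (θ * Real.sin θ + Real.cos θ) =
        3 / 2 - (1 - Real.sqrt (1 - θ ^ 2)) / 8
          + (1 / 8) * (Real.sin θ + Real.cos θ * (1 + Real.sqrt (1 - θ ^ 2))) ∧
      3 / 2 + (1 / 4) * (θ * Real.sin θ + Real.cos θ) > 7 / 4 := by
  set f : ℝ → ℝ := fun θ =>
    (3 / 2 + (1 / 4) * (θ * Real.sin θ + Real.cos θ)) -
      (3 / 2 - (1 - Real.sqrt (1 - θ ^ 2)) / 8
        + (1 / 8) * (Real.sin θ + Real.cos θ * (1 + Real.sqrt (1 - θ ^ 2)))) with hf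
  have hc : ContinuousOn f (Set.Icc (1/4 : ℝ) (1/2)) := by fun_prop
  have ha : f (1/4) < 0 := by
    have hs2 : Real.sqrt (1 - (1/4 : ℝ)^2) ^ 2 = 15/16 := by
      rw [Real.sq_sqrt (by norm_num)]; norm_num
    have hsn : 0 ≤ Real.sqrt (1 - (1/4 : ℝ)^2) := Real.sqrt_nonneg _
    have hsl : (0.968 : ℝ) ≤ Real.sqrt (1 - (1/4 : ℝ)^2) := by nlinarith
    have hsu : Real.sqrt (1 - (1/4 : ℝ)^2) ≤ 1 := by nlinarith
    have hsin : (1/4 : ℝ) - (1/4)^3 / 4 < Real.sin (1/4) :=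
      by have := Real.sin_gt_sub_cube (by norm_num : (0:ℝ) < 1/4); linarith
    have hcos : Real.cos (1/4) ≤ 1 := Real.cos_le_one _
    simp only [hf]
    nlinarith [mul_nonneg (sub_nonneg.2 hsu) (sub_nonneg.2 hcos)]
  have hb : 0 < f (1/2) := by
    have hs2 : Real.sqrt (1 - (1/2 : ℝ)^2) ^ 2 = 3/4 := by
      rw [Real.sq_sqrt (by norm_num)]; norm_num
    have hsn : 0 ≤ Real.sqrt (1 - (1/2 : ℝ)^2) := Real.sqrt_nonneg _
    have hsu : Real.sqrt (1 - (1/2 : ℝ)^2) < 1 := by nlinarith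
    have hcos : (0 : ℝ) < Real.cos (1/2) := by
      apply Real.cos_pos_of_mem_Ioo
      constructor <;> nlinarith [Real.pi_gt_three]
    simp only [hf]
    nlinarith [mul_pos hcos (sub_pos.2 hsu)]
  obtain ⟨θ, hθ, hfθ⟩ := intermediate_value_Ioo (by norm_num : (1/4:ℝ) ≤ 1/2) hc ⟨ha, hb⟩
  have h1 : (0 : ℝ) < θ := by linarith [hθ.1]
  have h2 : θ < 1 := by linarith [hθ.2]
  have hsin : θ - θ^3 / 4 < Real.sin θ := by have := Real.sin_gt_sub_cube h1; linarith [pow_pos h1 3]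
  have hcos : 1 - θ^2 / 2 < Real.cos θ := Real.one_sub_sq_div_two_lt_cos (by linarith [hθ.1])
  refine ⟨θ, ⟨h1, h2⟩, ?_, ?_⟩
  · simp only [hf] at hfθ; linarith
  · have hθ2 : θ^2 ≤ 1 := by nlinarith [mul_pos (sub_pos.2 h2) (show (0:ℝ) < 1 + θ by linarith)]
    have h4 : θ^4 ≤ θ^2 := by nlinarith [mul_nonneg (sq_nonneg θ) (sub_nonneg.2 hθ2)]
    have : 1 < θ * Real.sin θ + Real.cos θ := by
      nlinarith [mul_pos h1 (sub_pos.2 hsin)]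
    linarith
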